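/- arXiv:2312.02294 — 2 statements merged into one kernel-verified Lean document; each statement's English description precedes it below -/
import Mathlib

section
/- Let L > 0, T > 0 and fix feedback gains α, β with 0 < |α| < 1 and β > 0. For every classical solution u of the closed-loop linear KP-II system on [0,L]² × [0,T] and every t ∈ (0,T), the energy E(t) is differentiable and satisfies E′(t) = −((1−α²)/2) ∫₀^L u_x(0,y,t)² dy − β ∫₀^L u(x,L,t)² dx − ½ ∫₀^L ((∂ₓ⁻¹ u_y)(0,y,t))² dy. -/
open MeasureTheory Real

noncomputable section

/-- Partial derivative in `x` of `u(x,y,t)`. -/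
def pdx (u : ℝ → ℝ → ℝ → ℝ) (x y t : ℝ) : ℝ := deriv (fun x' => u x' y t) x

/-- Third partial derivative in `x` of `u(x,y,t)`. -/
def pdx3 (u : ℝ → ℝ → ℝ → ℝ) (x y t : ℝ) : ℝ := iteratedDeriv 3 (fun x' => u x' y t) x

/-- Partial derivative in `y` of `u(x,y,t)`. -/
def pdy (u : ℝ → ℝ → ℝ → ℝ) (x y t : ℝ) : ℝ := deriv (fun y' => u x y' t) y

/-- Second partial derivative in `y` of `u(x,y,t)`. -/
def pdy2 (u : ℝ → ℝ → ℝ → ℝ) (x y t : ℝ) : ℝ := iteratedDeriv 2 (fun y' => u x y' t) y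

/-- Partial derivative in `t` of `u(x,y,t)`. -/
def pdt (u : ℝ → ℝ → ℝ → ℝ) (x y t : ℝ) : ℝ := deriv (fun t' => u x y t') t

/-- The nonlocal operator `(∂ₓ⁻¹ w)(x,y) = -∫ₓ^L w(s,y) ds`. -/
def pxInv (L : ℝ) (w : ℝ → ℝ → ℝ) (x y : ℝ) : ℝ := -(∫ s in x..L, w s y)

/-- A classical solution of the closed-loop linear KP-II system on `[0,L]² × [0,T]`:
`u` is `C³`, satisfies `u_t + u_x + u_xxx + ∂ₓ⁻¹ u_yy = 0` on `Ω × (0,T)` and the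
boundary feedback conditions for all `t ∈ [0,T]`. -/
def IsKPSolution (L T α β : ℝ) (u : ℝ → ℝ → ℝ → ℝ) : Prop :=
  ContDiff ℝ 3 (fun p : ℝ × ℝ × ℝ => u p.1 p.2.1 p.2.2) ∧
  (∀ x ∈ Set.Ioo (0:ℝ) L, ∀ y ∈ Set.Ioo (0:ℝ) L, ∀ t ∈ Set.Ioo (0:ℝ) T,
      pdt u x y t + pdx u x y t + pdx3 u x y t
        + pxInv L (fun s y' => pdy2 u s y' t) x y = 0) ∧
  (∀ y ∈ Set.Icc (0:ℝ) L, ∀ t ∈ Set.Icc (0:ℝ) T,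
      u 0 y t = 0 ∧ u L y t = 0 ∧ pdx u L y t = α * pdx u 0 y t) ∧
  (∀ x ∈ Set.Icc (0:ℝ) L, ∀ t ∈ Set.Icc (0:ℝ) T,
      pdy u x L t = β * pdx u x L t ∧ pdy u x 0 t = 0)

/-- The energy `E(t) = ½ ∫_Ω u(x,y,t)² dx dy`. -/
def energy (L : ℝ) (u : ℝ → ℝ → ℝ → ℝ) (t : ℝ) : ℝ :=
  (1/2) * ∫ x in (0:ℝ)..L, ∫ y in (0:ℝ)..L, (u x y t)^2

namespace KPaux

lemma hasDerivAt_param (f f' : ℝ → ℝ → ℝ) (a b t₀ : ℝ)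
    (hf : Continuous fun p : ℝ × ℝ => f p.1 p.2)
    (hf' : Continuous fun p : ℝ × ℝ => f' p.1 p.2)
    (hd : ∀ s t, HasDerivAt (fun t' => f s t') (f' s t) t) :
    HasDerivAt (fun t => ∫ s in a..b, f s t) (∫ s in a..b, f' s t₀) t₀ := by
  obtain ⟨C, hC⟩ := ((isCompact_uIcc (a := a) (b := b)).prod
    (isCompact_closedBall t₀ 1)).exists_bound_of_continuousOn hf'.continuousOn
  have key := intervalIntegral.hasDerivAt_integral_of_dominated_loc_of_deriv_le
    (F := fun t s => f s t) (F' := fun t s => f' s t) (x₀ := t₀) (a := a) (b := b)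
    (bound := fun _ => C) (μ := volume) (Metric.ball_mem_nhds t₀ one_pos)
    (Filter.Eventually.of_forall fun x =>
      (hf.comp (continuous_id.prodMk continuous_const)).aestronglyMeasurable)
    ((hf.comp (continuous_id.prodMk continuous_const)).intervalIntegrable a b)
    ((hf'.comp (continuous_id.prodMk continuous_const)).aestronglyMeasurable)
    (Filter.Eventually.of_forall fun s hs x hx =>
      hC (s, x) ⟨Set.uIoc_subset_uIcc hs, Metric.ball_subset_closedBall hx⟩)
    intervalIntegrable_const
    (Filter.Eventually.of_forall fun s _ x _ => hd s x)
  exact key.2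

lemma integral_swap_cont (f : ℝ → ℝ → ℝ) (hf : Continuous fun p : ℝ × ℝ => f p.1 p.2)
    {a b c d : ℝ} (hab : a ≤ b) (hcd : c ≤ d) :
    ∫ x in a..b, ∫ y in c..d, f x y = ∫ y in c..d, ∫ x in a..b, f x y := by
  have hint : Integrable (Function.uncurry f)
      ((volume.restrict (Set.Ioc a b)).prod (volume.restrict (Set.Ioc c d))) := by
    rw [Measure.prod_restrict, ← Measure.volume_eq_prod]
    exact ((hf.continuousOn).integrableOn_compact
      (isCompact_Icc.prod isCompact_Icc)).mono_set
      (Set.prod_mono Set.Ioc_subset_Icc_self Set.Ioc_subset_Icc_self)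
  rw [intervalIntegral.integral_of_le hab, intervalIntegral.integral_of_le hcd]
  simp_rw [intervalIntegral.integral_of_le hcd, intervalIntegral.integral_of_le hab]
  exact MeasureTheory.integral_integral_swap hint

lemma hasDerivAt_slice1 (f : ℝ × ℝ × ℝ → ℝ) (hf : Differentiable ℝ f) (x y s : ℝ) :
    HasDerivAt (fun x' => f (x', y, s)) (fderiv ℝ f (x, y, s) (1, 0, 0)) x := by
  have h1 : HasDerivAt (fun x' : ℝ => ((x', y, s) : ℝ × ℝ × ℝ)) ((1 : ℝ), (0 : ℝ × ℝ)) x :=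
    (hasDerivAt_id x).prodMk (hasDerivAt_const x ((y, s) : ℝ × ℝ))
  exact (hf (x, y, s)).hasFDerivAt.comp_hasDerivAt x h1

lemma hasDerivAt_slice2 (f : ℝ × ℝ × ℝ → ℝ) (hf : Differentiable ℝ f) (x y s : ℝ) :
    HasDerivAt (fun y' => f (x, y', s)) (fderiv ℝ f (x, y, s) (0, 1, 0)) y := by
  have h1 : HasDerivAt (fun y' : ℝ => ((x, y', s) : ℝ × ℝ × ℝ))
      ((0 : ℝ), ((1 : ℝ), (0 : ℝ))) y :=
    (hasDerivAt_const y x).prodMk ((hasDerivAt_id y).prodMk (hasDerivAt_const y s))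
  exact (hf (x, y, s)).hasFDerivAt.comp_hasDerivAt y h1

lemma hasDerivAt_slice3 (f : ℝ × ℝ × ℝ → ℝ) (hf : Differentiable ℝ f) (x y s : ℝ) :
    HasDerivAt (fun s' => f (x, y, s')) (fderiv ℝ f (x, y, s) (0, 0, 1)) s := by
  have h1 : HasDerivAt (fun s' : ℝ => ((x, y, s') : ℝ × ℝ × ℝ))
      ((0 : ℝ), ((0 : ℝ), (1 : ℝ))) s :=
    (hasDerivAt_const s x).prodMk ((hasDerivAt_const s y).prodMk (hasDerivAt_id s))
  exact (hf (x, y, s)).hasFDerivAt.comp_hasDerivAt s h1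

end KPaux

open KPaux

set_option maxHeartbeats 1000000 in
/-- Energy dissipation identity: for a classical solution of the closed-loop linear
KP-II system, the energy is differentiable on `(0,T)` with
`E′(t) = -((1-α²)/2) ∫₀^L u_x(0,y,t)² dy - β ∫₀^L u(x,L,t)² dx
        - ½ ∫₀^L ((∂ₓ⁻¹ u_y)(0,y,t))² dy`. -/
theorem kp_energy_derivative (L T α β : ℝ) (hL : 0 < L) (hT : 0 < T)
    (hα0 : 0 < |α|) (hα1 : |α| < 1) (hβ : 0 < β)
    (u : ℝ → ℝ → ℝ → ℝ) (hu : IsKPSolution L T α β u) :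
    ∀ t ∈ Set.Ioo (0:ℝ) T,
      HasDerivAt (energy L u)
        (-((1 - α^2)/2) * (∫ y in (0:ℝ)..L, (pdx u 0 y t)^2)
          - β * (∫ x in (0:ℝ)..L, (u x L t)^2)
          - (1/2) * (∫ y in (0:ℝ)..L, (pxInv L (fun s y' => pdy u s y' t) 0 y)^2)) t := by
  obtain ⟨hreg, hpde, hbc1, hbc2⟩ := hu
  intro t ht
  have htIcc : t ∈ Set.Icc (0:ℝ) T := ⟨ht.1.le, ht.2.le⟩
  set U : ℝ × ℝ × ℝ → ℝ := fun p => u p.1 p.2.1 p.2.2 with hUdef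
  have hU3 : ContDiff ℝ 3 U := hreg
  have hUd : Differentiable ℝ U := hU3.differentiable (by norm_num)
  set P1 : ℝ × ℝ × ℝ → ℝ := fun p => fderiv ℝ U p (1,0,0) with hP1def
  have hP1 : ContDiff ℝ 2 P1 := (hU3.fderiv_right (by norm_num)).clm_apply contDiff_const
  set P2 : ℝ × ℝ × ℝ → ℝ := fun p => fderiv ℝ P1 p (1,0,0) with hP2def
  have hP2 : ContDiff ℝ 1 P2 := (hP1.fderiv_right (by norm_num)).clm_apply contDiff_const
  set P3 : ℝ × ℝ × ℝ → ℝ := fun p => fderiv ℝ P2 p (1,0,0) with hP3def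
  have hP30 : ContDiff ℝ 0 P3 := (hP2.fderiv_right (m := 0) (by norm_num)).clm_apply contDiff_const
  have cP3 : Continuous P3 := hP30.continuous
  set Q1 : ℝ × ℝ × ℝ → ℝ := fun p => fderiv ℝ U p (0,1,0) with hQ1def
  have hQ1 : ContDiff ℝ 2 Q1 := (hU3.fderiv_right (by norm_num)).clm_apply contDiff_const
  set Q2 : ℝ × ℝ × ℝ → ℝ := fun p => fderiv ℝ Q1 p (0,1,0) with hQ2def
  have hQ2 : ContDiff ℝ 1 Q2 := (hQ1.fderiv_right (by norm_num)).clm_apply contDiff_const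
  set Pt : ℝ × ℝ × ℝ → ℝ := fun p => fderiv ℝ U p (0,0,1) with hPtdef
  have hPt : ContDiff ℝ 2 Pt := (hU3.fderiv_right (by norm_num)).clm_apply contDiff_const
  have cU : Continuous U := hU3.continuous
  have cP1 : Continuous P1 := hP1.continuous
  have cP2 : Continuous P2 := hP2.continuous
  have cQ1 : Continuous Q1 := hQ1.continuous
  have cQ2 : Continuous Q2 := hQ2.continuous
  have cPt : Continuous Pt := hPt.continuous
  have hP1d : Differentiable ℝ P1 := hP1.differentiable (by norm_num)
  have hP2d : Differentiable ℝ P2 := hP2.differentiable (by norm_num)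
  have hQ1d : Differentiable ℝ Q1 := hQ1.differentiable (by norm_num)
  -- identification of the `pdx`-style partial derivatives
  have hpdx : ∀ x y s, pdx u x y s = P1 (x,y,s) :=
    fun x y s => (hasDerivAt_slice1 U hUd x y s).deriv
  have hpdy : ∀ x y s, pdy u x y s = Q1 (x,y,s) :=
    fun x y s => (hasDerivAt_slice2 U hUd x y s).deriv
  have hpdt : ∀ x y s, pdt u x y s = Pt (x,y,s) :=
    fun x y s => (hasDerivAt_slice3 U hUd x y s).deriv
  have hpdx3 : ∀ x y s, pdx3 u x y s = P3 (x,y,s) := by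
    intro x y s
    have h1 : (deriv fun x' => u x' y s) = fun x' => P1 (x',y,s) :=
      funext fun x' => (hasDerivAt_slice1 U hUd x' y s).deriv
    have h2 : (deriv fun x' => P1 (x',y,s)) = fun x' => P2 (x',y,s) :=
      funext fun x' => (hasDerivAt_slice1 P1 hP1d x' y s).deriv
    have h0 : pdx3 u x y s = deriv (deriv (deriv (fun x' => u x' y s))) x := by
      simp [pdx3, iteratedDeriv_succ, iteratedDeriv_zero]
    rw [h0, h1, h2]
    exact (hasDerivAt_slice1 P2 hP2d x y s).deriv
  have hpdy2 : ∀ x y s, pdy2 u x y s = Q2 (x,y,s) := by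
    intro x y s
    have h1 : (deriv fun y' => u x y' s) = fun y' => Q1 (x,y',s) :=
      funext fun y' => (hasDerivAt_slice2 U hUd x y' s).deriv
    have h0 : pdy2 u x y s = deriv (deriv (fun y' => u x y' s)) y := by
      simp [pdy2, iteratedDeriv_succ, iteratedDeriv_zero]
    rw [h0, h1]
    exact (hasDerivAt_slice2 Q1 hQ1d x y s).deriv
  -- boundary conditions
  have hb0 : ∀ y ∈ Set.Icc (0:ℝ) L, u 0 y t = 0 := fun y hy => (hbc1 y hy t htIcc).1
  have hbL : ∀ y ∈ Set.Icc (0:ℝ) L, u L y t = 0 := fun y hy => (hbc1 y hy t htIcc).2.1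
  have hbα : ∀ y ∈ Set.Icc (0:ℝ) L, P1 (L,y,t) = α * P1 (0,y,t) := by
    intro y hy
    have h := (hbc1 y hy t htIcc).2.2
    rwa [hpdx, hpdx] at h
  have hbβ : ∀ x ∈ Set.Icc (0:ℝ) L, Q1 (x,L,t) = β * P1 (x,L,t) := by
    intro x hx
    have h := (hbc2 x hx t htIcc).1
    rwa [hpdy, hpdx] at h
  have hby0 : ∀ x ∈ Set.Icc (0:ℝ) L, Q1 (x,0,t) = 0 := by
    intro x hx
    have h := (hbc2 x hx t htIcc).2
    rwa [hpdy] at h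
  -- the nonlocal terms
  set q : ℝ → ℝ → ℝ := fun x y => ∫ s in L..x, Q2 (s,y,t) with hqdef
  set w : ℝ → ℝ → ℝ := fun x y => ∫ s in L..x, Q1 (s,y,t) with hwdef
  have hqeq : ∀ x y, pxInv L (fun s y' => pdy2 u s y' t) x y = q x y := by
    intro x y
    have h1 : (∫ s in x..L, pdy2 u s y t) = ∫ s in x..L, Q2 (s,y,t) :=
      intervalIntegral.integral_congr fun s _ => hpdy2 s y t
    simp only [hqdef]
    show -(∫ s in x..L, pdy2 u s y t) = ∫ s in L..x, Q2 (s,y,t)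
    rw [h1, intervalIntegral.integral_symm x L]
  have cw : Continuous fun p : ℝ × ℝ => w p.1 p.2 := by
    simp only [hwdef]
    exact intervalIntegral.continuous_parametric_intervalIntegral_of_continuous (μ := volume)
      (f := fun (p : ℝ × ℝ) (s : ℝ) => Q1 (s, p.2, t)) (a₀ := L)
      (cQ1.comp (continuous_snd.prodMk (continuous_fst.snd.prodMk continuous_const)))
      continuous_fst
  have cq : Continuous fun p : ℝ × ℝ => q p.1 p.2 := by
    simp only [hqdef]
    exact intervalIntegral.continuous_parametric_intervalIntegral_of_continuous (μ := volume)
      (f := fun (p : ℝ × ℝ) (s : ℝ) => Q2 (s, p.2, t)) (a₀ := L)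
      (cQ2.comp (continuous_snd.prodMk (continuous_fst.snd.prodMk continuous_const)))
      continuous_fst
  have hwx : ∀ x y, HasDerivAt (fun x' => w x' y) (Q1 (x,y,t)) x := by
    intro x y
    exact ((cQ1.comp (by fun_prop : Continuous fun s : ℝ => ((s,y,t) : ℝ×ℝ×ℝ))).integral_hasStrictDerivAt
      L x).hasDerivAt
  have hwy : ∀ x y, HasDerivAt (fun y' => w x y') (q x y) y := by
    intro x y
    exact hasDerivAt_param (fun s y' => Q1 (s,y',t)) (fun s y' => Q2 (s,y',t)) L x y
      (cQ1.comp (by fun_prop)) (cQ2.comp (by fun_prop))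
      (fun s y' => hasDerivAt_slice2 Q1 hQ1d s y' t)
  have hwL0 : ∀ y, w L y = 0 := fun y => intervalIntegral.integral_same
  have hwxL : ∀ x ∈ Set.Icc (0:ℝ) L, w x L = β * u x L t := by
    intro x hx
    have hsub : Set.uIcc x L ⊆ Set.Icc (0:ℝ) L := by
      rw [Set.uIcc_of_le hx.2]
      exact Set.Icc_subset_Icc hx.1 le_rfl
    have h1 : (∫ s in x..L, Q1 (s,L,t)) = ∫ s in x..L, β * P1 (s,L,t) :=
      intervalIntegral.integral_congr fun s hs => hbβ s (hsub hs)
    have h2 : (∫ s in x..L, P1 (s,L,t)) = u L L t - u x L t := by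
      refine intervalIntegral.integral_eq_sub_of_hasDerivAt (f := fun s => u s L t) ?_ ?_
      · exact fun s _ => hasDerivAt_slice1 U hUd s L t
      · exact (cP1.comp (by fun_prop)).intervalIntegrable _ _
    have hLL : u L L t = 0 := hbL L (Set.right_mem_Icc.mpr hL.le)
    show (∫ s in L..x, Q1 (s,L,t)) = β * u x L t
    rw [intervalIntegral.integral_symm x L, h1, intervalIntegral.integral_const_mul, h2, hLL]
    ring
  have hwx0 : ∀ x ∈ Set.Icc (0:ℝ) L, w x 0 = 0 := by
    intro x hx
    have hsub : Set.uIcc L x ⊆ Set.Icc (0:ℝ) L := by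
      rw [Set.uIcc_comm, Set.uIcc_of_le hx.2]
      exact Set.Icc_subset_Icc hx.1 le_rfl
    have h1 : (∫ s in L..x, Q1 (s,0,t)) = ∫ s in L..x, (0:ℝ) :=
      intervalIntegral.integral_congr fun s hs => hby0 s (hsub hs)
    show (∫ s in L..x, Q1 (s,0,t)) = 0
    rw [h1]; simp
  -- the PDE in pointwise product form
  have hPDE : ∀ x ∈ Set.Ioo (0:ℝ) L, ∀ y ∈ Set.Ioo (0:ℝ) L,
      u x y t * Pt (x,y,t)
        = -(u x y t * P1 (x,y,t)) - u x y t * P3 (x,y,t) - u x y t * q x y := by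
    intro x hx y hy
    have h0 := hpde x hx y hy t ht
    rw [hpdt, hpdx, hpdx3, hqeq] at h0
    have h1 : Pt (x,y,t) = -(P1 (x,y,t)) - P3 (x,y,t) - q x y := by linarith
    rw [h1]; ring
  -- named slice derivatives
  have dxU : ∀ x y s, HasDerivAt (fun x' => u x' y s) (P1 (x,y,s)) x :=
    fun x y s => hasDerivAt_slice1 U hUd x y s
  have dxP1 : ∀ x y s, HasDerivAt (fun x' => P1 (x',y,s)) (P2 (x,y,s)) x :=
    fun x y s => hasDerivAt_slice1 P1 hP1d x y s
  have dxP2 : ∀ x y s, HasDerivAt (fun x' => P2 (x',y,s)) (P3 (x,y,s)) x :=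
    fun x y s => hasDerivAt_slice1 P2 hP2d x y s
  have dyU : ∀ x y s, HasDerivAt (fun y' => u x y' s) (Q1 (x,y,s)) y :=
    fun x y s => hasDerivAt_slice2 U hUd x y s
  have dtU : ∀ x y s, HasDerivAt (fun s' => u x y s') (Pt (x,y,s)) s :=
    fun x y s => hasDerivAt_slice3 U hUd x y s
  -- joint continuity abbreviations (time slice `t` frozen)
  have jp : Continuous fun p : ℝ × ℝ => ((p.1, p.2, t) : ℝ × ℝ × ℝ) := by fun_prop
  have cUt : Continuous fun p : ℝ × ℝ => u p.1 p.2 t := cU.comp jp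
  have cP1t : Continuous fun p : ℝ × ℝ => P1 (p.1, p.2, t) := cP1.comp jp
  have cP3t : Continuous fun p : ℝ × ℝ => P3 (p.1, p.2, t) := cP3.comp jp
  have cQ1t : Continuous fun p : ℝ × ℝ => Q1 (p.1, p.2, t) := cQ1.comp jp
  have cPtt : Continuous fun p : ℝ × ℝ => Pt (p.1, p.2, t) := cPt.comp jp
  -- Step A : differentiation under the integral sign
  set G : ℝ → ℝ → ℝ := fun x τ => ∫ y in (0:ℝ)..L, (u x y τ)^2 with hGdef
  set G' : ℝ → ℝ → ℝ := fun x τ => ∫ y in (0:ℝ)..L, 2 * (u x y τ * Pt (x,y,τ)) with hG'def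
  have hGd : ∀ x τ₀, HasDerivAt (fun τ => G x τ) (G' x τ₀) τ₀ := by
    intro x τ₀
    simp only [hGdef, hG'def]
    refine hasDerivAt_param (fun y τ => (u x y τ)^2)
      (fun y τ => 2 * (u x y τ * Pt (x,y,τ))) 0 L τ₀ ?_ ?_ ?_
    · exact (cU.comp (by fun_prop : Continuous fun p : ℝ × ℝ =>
        ((x, p.1, p.2) : ℝ × ℝ × ℝ))).pow 2
    · exact continuous_const.mul ((cU.comp (by fun_prop : Continuous fun p : ℝ × ℝ =>
        ((x, p.1, p.2) : ℝ × ℝ × ℝ))).mul (cPt.comp (by fun_prop)))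
    · intro y τ
      have h := (dtU x y τ).fun_pow 2
      refine h.congr_deriv ?_
      norm_num
      ring
  have hGcont : Continuous fun p : ℝ × ℝ => G p.1 p.2 := by
    simp only [hGdef]
    exact intervalIntegral.continuous_parametric_intervalIntegral_of_continuous' (μ := volume)
      (f := fun (p : ℝ × ℝ) y => (u p.1 y p.2)^2)
      ((cU.comp (by fun_prop : Continuous fun z : (ℝ × ℝ) × ℝ =>
        ((z.1.1, z.2, z.1.2) : ℝ × ℝ × ℝ))).fun_pow 2) 0 L
  have hG'cont : Continuous fun p : ℝ × ℝ => G' p.1 p.2 := by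
    simp only [hG'def]
    exact intervalIntegral.continuous_parametric_intervalIntegral_of_continuous' (μ := volume)
      (f := fun (p : ℝ × ℝ) y => 2 * (u p.1 y p.2 * Pt (p.1, y, p.2)))
      (continuous_const.fun_mul ((cU.comp (by fun_prop : Continuous fun z : (ℝ × ℝ) × ℝ =>
        ((z.1.1, z.2, z.1.2) : ℝ × ℝ × ℝ))).fun_mul (cPt.comp (by fun_prop)))) 0 L
  have hE0 : HasDerivAt (fun τ => ∫ x in (0:ℝ)..L, G x τ) (∫ x in (0:ℝ)..L, G' x t) t :=
    hasDerivAt_param G G' 0 L t hGcont hG'cont hGd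
  -- Step B : rewrite the derivative value
  have hhalf : (1/2 : ℝ) * (∫ x in (0:ℝ)..L, G' x t)
      = ∫ x in (0:ℝ)..L, ∫ y in (0:ℝ)..L, u x y t * Pt (x,y,t) := by
    have h1 : ∀ x ∈ Set.uIcc (0:ℝ) L, G' x t
        = 2 * ∫ y in (0:ℝ)..L, u x y t * Pt (x,y,t) := by
      intro x _
      simp only [hG'def]
      exact intervalIntegral.integral_const_mul 2 _
    rw [intervalIntegral.integral_congr (fun x hx => h1 x hx),
      intervalIntegral.integral_const_mul]
    ring
  have haeIoo : ∀ᵐ (z : ℝ), z ∈ Set.uIoc (0:ℝ) L → z ∈ Set.Ioo (0:ℝ) L := by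
    have h0 : ({L} : Set ℝ)ᶜ ∈ MeasureTheory.ae volume :=
      compl_mem_ae_iff.mpr (measure_singleton L)
    filter_upwards [h0] with z hz hz'
    rw [Set.uIoc_of_le hL.le] at hz'
    exact ⟨hz'.1, lt_of_le_of_ne hz'.2 (by simpa using hz)⟩
  have hIsplit : (∫ x in (0:ℝ)..L, ∫ y in (0:ℝ)..L, u x y t * Pt (x,y,t))
      = -(∫ x in (0:ℝ)..L, ∫ y in (0:ℝ)..L, u x y t * P1 (x,y,t))
        - (∫ x in (0:ℝ)..L, ∫ y in (0:ℝ)..L, u x y t * P3 (x,y,t))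
        - (∫ x in (0:ℝ)..L, ∫ y in (0:ℝ)..L, u x y t * q x y) := by
    have hinner : ∀ x ∈ Set.Ioo (0:ℝ) L,
        (∫ y in (0:ℝ)..L, u x y t * Pt (x,y,t))
          = -(∫ y in (0:ℝ)..L, u x y t * P1 (x,y,t))
            - (∫ y in (0:ℝ)..L, u x y t * P3 (x,y,t))
            - (∫ y in (0:ℝ)..L, u x y t * q x y) := by
      intro x hx
      have i1 : IntervalIntegrable (fun y => u x y t * P1 (x,y,t)) volume 0 L :=
        ((cUt.mul cP1t).comp (Continuous.prodMk_right x)).intervalIntegrable 0 L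
      have i3 : IntervalIntegrable (fun y => u x y t * P3 (x,y,t)) volume 0 L :=
        ((cUt.mul cP3t).comp (Continuous.prodMk_right x)).intervalIntegrable 0 L
      have iq : IntervalIntegrable (fun y => u x y t * q x y) volume 0 L :=
        ((cUt.mul cq).comp (Continuous.prodMk_right x)).intervalIntegrable 0 L
      have hcong : (∫ y in (0:ℝ)..L, u x y t * Pt (x,y,t))
          = ∫ y in (0:ℝ)..L,
              (-(u x y t * P1 (x,y,t)) - u x y t * P3 (x,y,t) - u x y t * q x y) := by
        apply intervalIntegral.integral_congr_ae
        filter_upwards [haeIoo] with y hy' hy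
        exact hPDE x hx y (hy' hy)
      have i1n : IntervalIntegrable (fun y => -(u x y t * P1 (x,y,t))) volume 0 L := i1.neg
      have i13 : IntervalIntegrable
          (fun y => -(u x y t * P1 (x,y,t)) - u x y t * P3 (x,y,t)) volume 0 L := i1n.sub i3
      rw [hcong, intervalIntegral.integral_sub i13 iq,
        intervalIntegral.integral_sub i1n i3, intervalIntegral.integral_neg]
    have o1 : IntervalIntegrable (fun x => ∫ y in (0:ℝ)..L, u x y t * P1 (x,y,t)) volume 0 L :=
      (intervalIntegral.continuous_parametric_intervalIntegral_of_continuous' (μ := volume)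
        (f := fun (x:ℝ) y => u x y t * P1 (x,y,t)) (cUt.mul cP1t) 0 L).intervalIntegrable 0 L
    have o3 : IntervalIntegrable (fun x => ∫ y in (0:ℝ)..L, u x y t * P3 (x,y,t)) volume 0 L :=
      (intervalIntegral.continuous_parametric_intervalIntegral_of_continuous' (μ := volume)
        (f := fun (x:ℝ) y => u x y t * P3 (x,y,t)) (cUt.mul cP3t) 0 L).intervalIntegrable 0 L
    have oq : IntervalIntegrable (fun x => ∫ y in (0:ℝ)..L, u x y t * q x y) volume 0 L :=
      (intervalIntegral.continuous_parametric_intervalIntegral_of_continuous' (μ := volume)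
        (f := fun (x:ℝ) y => u x y t * q x y) (cUt.mul cq) 0 L).intervalIntegrable 0 L
    have hcong2 : (∫ x in (0:ℝ)..L, ∫ y in (0:ℝ)..L, u x y t * Pt (x,y,t))
        = ∫ x in (0:ℝ)..L, (-(∫ y in (0:ℝ)..L, u x y t * P1 (x,y,t))
            - (∫ y in (0:ℝ)..L, u x y t * P3 (x,y,t))
            - (∫ y in (0:ℝ)..L, u x y t * q x y)) := by
      apply intervalIntegral.integral_congr_ae
      filter_upwards [haeIoo] with x hx' hx
      exact hinner x (hx' hx)
    have o1n : IntervalIntegrable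
        (fun x => -(∫ y in (0:ℝ)..L, u x y t * P1 (x,y,t))) volume 0 L := o1.neg
    have o13 : IntervalIntegrable (fun x => -(∫ y in (0:ℝ)..L, u x y t * P1 (x,y,t))
        - ∫ y in (0:ℝ)..L, u x y t * P3 (x,y,t)) volume 0 L := o1n.sub o3
    rw [hcong2, intervalIntegral.integral_sub o13 oq,
      intervalIntegral.integral_sub o1n o3, intervalIntegral.integral_neg]
  -- the transport term
  have hJ1 : (∫ x in (0:ℝ)..L, ∫ y in (0:ℝ)..L, u x y t * P1 (x,y,t)) = 0 := by
    rw [integral_swap_cont (fun x y => u x y t * P1 (x,y,t)) (cUt.mul cP1t) hL.le hL.le]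
    have h1 : ∀ y ∈ Set.uIcc (0:ℝ) L, (∫ x in (0:ℝ)..L, u x y t * P1 (x,y,t)) = 0 := by
      intro y hy
      rw [Set.uIcc_of_le hL.le] at hy
      have hFTC : (∫ x in (0:ℝ)..L, u x y t * P1 (x,y,t))
          = (u L y t)^2/2 - (u 0 y t)^2/2 := by
        refine intervalIntegral.integral_eq_sub_of_hasDerivAt
          (f := fun x => (u x y t)^2/2) ?_ ?_
        · intro x _
          have h := ((dxU x y t).fun_pow 2).div_const 2
          refine h.congr_deriv ?_
          norm_num
          ring
        · exact ((cUt.mul cP1t).comp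
            (continuous_id.prodMk continuous_const)).intervalIntegrable 0 L
      rw [hFTC, hbL y hy, hb0 y hy]
      norm_num
    rw [intervalIntegral.integral_congr (fun y hy => h1 y hy)]
    simp
  -- the dispersive term
  have hJ2 : (∫ x in (0:ℝ)..L, ∫ y in (0:ℝ)..L, u x y t * P3 (x,y,t))
      = (1-α^2)/2 * ∫ y in (0:ℝ)..L, (P1 (0,y,t))^2 := by
    rw [integral_swap_cont (fun x y => u x y t * P3 (x,y,t)) (cUt.mul cP3t) hL.le hL.le]
    have h1 : ∀ y ∈ Set.uIcc (0:ℝ) L, (∫ x in (0:ℝ)..L, u x y t * P3 (x,y,t))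
        = (1-α^2)/2 * (P1 (0,y,t))^2 := by
      intro y hy
      rw [Set.uIcc_of_le hL.le] at hy
      have hFTC : (∫ x in (0:ℝ)..L, u x y t * P3 (x,y,t))
          = (u L y t * P2 (L,y,t) - (P1 (L,y,t))^2/2)
            - (u 0 y t * P2 (0,y,t) - (P1 (0,y,t))^2/2) := by
        refine intervalIntegral.integral_eq_sub_of_hasDerivAt
          (f := fun x => u x y t * P2 (x,y,t) - (P1 (x,y,t))^2/2) ?_ ?_
        · intro x _
          have h1' := (dxU x y t).fun_mul (dxP2 x y t)
          have h2' := ((dxP1 x y t).fun_pow 2).div_const 2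
          refine (h1'.sub h2').congr_deriv ?_
          norm_num
          ring
        · exact ((cUt.mul cP3t).comp
            (continuous_id.prodMk continuous_const)).intervalIntegrable 0 L
      rw [hFTC, hbL y hy, hb0 y hy, hbα y hy]
      ring
    rw [intervalIntegral.integral_congr (fun y hy => h1 y hy),
      intervalIntegral.integral_const_mul]
  -- the nonlocal term
  have hJ3 : (∫ x in (0:ℝ)..L, ∫ y in (0:ℝ)..L, u x y t * q x y)
      = β * (∫ x in (0:ℝ)..L, (u x L t)^2) + (1/2) * ∫ y in (0:ℝ)..L, (w 0 y)^2 := by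
    have hin : ∀ x ∈ Set.uIcc (0:ℝ) L, (∫ y in (0:ℝ)..L, u x y t * q x y)
        = β * (u x L t)^2 - ∫ y in (0:ℝ)..L, Q1 (x,y,t) * w x y := by
      intro x hx
      rw [Set.uIcc_of_le hL.le] at hx
      have iQw : IntervalIntegrable (fun y => Q1 (x,y,t) * w x y) volume 0 L :=
        ((cQ1t.mul cw).comp (Continuous.prodMk_right x)).intervalIntegrable 0 L
      have iUq : IntervalIntegrable (fun y => u x y t * q x y) volume 0 L :=
        ((cUt.mul cq).comp (Continuous.prodMk_right x)).intervalIntegrable 0 L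
      have hFTC : (∫ y in (0:ℝ)..L, (Q1 (x,y,t) * w x y + u x y t * q x y))
          = u x L t * w x L - u x 0 t * w x 0 := by
        refine intervalIntegral.integral_eq_sub_of_hasDerivAt
          (f := fun y => u x y t * w x y) ?_ ?_
        · exact fun y _ => (dyU x y t).mul (hwy x y)
        · exact iQw.add iUq
      rw [intervalIntegral.integral_add iQw iUq, hwxL x hx, hwx0 x hx] at hFTC
      have h2 : (∫ y in (0:ℝ)..L, u x y t * q x y)
          = u x L t * (β * u x L t) - u x 0 t * 0
            - ∫ y in (0:ℝ)..L, Q1 (x,y,t) * w x y := by linarith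
      rw [h2]; ring
    rw [intervalIntegral.integral_congr (fun x hx => hin x hx)]
    have ib : IntervalIntegrable (fun x => β * (u x L t)^2) volume 0 L :=
      (continuous_const.mul ((cU.comp (by fun_prop : Continuous fun x : ℝ =>
        ((x, L, t) : ℝ × ℝ × ℝ))).pow 2)).intervalIntegrable 0 L
    have iqw : IntervalIntegrable (fun x => ∫ y in (0:ℝ)..L, Q1 (x,y,t) * w x y) volume 0 L :=
      (intervalIntegral.continuous_parametric_intervalIntegral_of_continuous' (μ := volume)
        (f := fun (x:ℝ) y => Q1 (x,y,t) * w x y) (cQ1t.mul cw) 0 L).intervalIntegrable 0 L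
    rw [intervalIntegral.integral_sub ib iqw, intervalIntegral.integral_const_mul]
    have h2 : (∫ x in (0:ℝ)..L, ∫ y in (0:ℝ)..L, Q1 (x,y,t) * w x y)
        = -((1/2) * ∫ y in (0:ℝ)..L, (w 0 y)^2) := by
      rw [integral_swap_cont (fun x y => Q1 (x,y,t) * w x y) (cQ1t.mul cw) hL.le hL.le]
      have hin2 : ∀ y ∈ Set.uIcc (0:ℝ) L, (∫ x in (0:ℝ)..L, Q1 (x,y,t) * w x y)
          = -((w 0 y)^2/2) := by
        intro y _
        have hFTC : (∫ x in (0:ℝ)..L, Q1 (x,y,t) * w x y)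
            = (w L y)^2/2 - (w 0 y)^2/2 := by
          refine intervalIntegral.integral_eq_sub_of_hasDerivAt
            (f := fun x => (w x y)^2/2) ?_ ?_
          · intro x _
            have h := ((hwx x y).fun_pow 2).div_const 2
            refine h.congr_deriv ?_
            norm_num
            ring
          · exact ((cQ1t.mul cw).comp
              (continuous_id.prodMk continuous_const)).intervalIntegrable 0 L
        rw [hFTC, hwL0 y]
        ring
      rw [intervalIntegral.integral_congr (fun y hy => hin2 y hy),
        intervalIntegral.integral_neg, intervalIntegral.integral_div]
      ring
    rw [h2]
    ring
  -- identify the target integrals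
  have hT1 : (∫ y in (0:ℝ)..L, (pdx u 0 y t)^2) = ∫ y in (0:ℝ)..L, (P1 (0,y,t))^2 :=
    intervalIntegral.integral_congr fun y _ => by rw [hpdx]
  have hT3 : (∫ y in (0:ℝ)..L, (pxInv L (fun s y' => pdy u s y' t) 0 y)^2)
      = ∫ y in (0:ℝ)..L, (w 0 y)^2 := by
    apply intervalIntegral.integral_congr
    intro y _
    have hxy : pxInv L (fun s y' => pdy u s y' t) 0 y = w 0 y := by
      have h1 : (∫ s in (0:ℝ)..L, pdy u s y t) = ∫ s in (0:ℝ)..L, Q1 (s,y,t) :=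
        intervalIntegral.integral_congr fun s _ => hpdy s y t
      simp only [hwdef]
      show -(∫ s in (0:ℝ)..L, pdy u s y t) = ∫ s in L..(0:ℝ), Q1 (s,y,t)
      rw [h1, intervalIntegral.integral_symm 0 L]
    simp only [hxy]
  -- assemble everything
  have hval : (1/2 : ℝ) * (∫ x in (0:ℝ)..L, G' x t)
      = -((1 - α^2)/2) * (∫ y in (0:ℝ)..L, (pdx u 0 y t)^2)
        - β * (∫ x in (0:ℝ)..L, (u x L t)^2)
        - (1/2) * (∫ y in (0:ℝ)..L, (pxInv L (fun s y' => pdy u s y' t) 0 y)^2) := by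
    rw [hhalf, hIsplit, hJ1, hJ2, hJ3, hT1, hT3]
    ring
  have hfin := hE0.const_mul (1/2 : ℝ)
  rw [hval] at hfin
  exact hfin


end
end

section
/- Let L > 0, T > 0 and fix feedback gains α, β with 0 < |α| < 1 and β > 0. Set C := min{(1−α²)/2, β} > 0. For every classical solution u of the closed-loop linear KP-II system on [0,L]² × [0,T], the energy E is non-increasing on [0,T] and for every t ∈ (0,T) it satisfies E′(t) ≤ −C [ ∫₀^L u_x(0,y,t)² dy + ∫₀^L u(x,L,t)² dx + ∫₀^L ((∂ₓ⁻¹ u_y)(0,y,t))² dy ]. -/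
open MeasureTheory Real

noncomputable section

/-! ### Auxiliary machinery -/

section Aux

open intervalIntegral Function

/-- Fubini for continuous functions over a rectangle (monotone bounds). -/
lemma kp_cont_integrable_prod {f : ℝ → ℝ → ℝ} (hf : Continuous (Function.uncurry f))
    (a b c d : ℝ) :
    Integrable (Function.uncurry f)
      ((volume.restrict (Set.Ioc a b)).prod (volume.restrict (Set.Ioc c d))) := by
  rw [Measure.prod_restrict]
  apply IntegrableOn.mono_set
    (hf.continuousOn.integrableOn_compact (isCompact_Icc.prod isCompact_Icc)
      (K := Set.Icc a b ×ˢ Set.Icc c d))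
  exact Set.prod_mono Set.Ioc_subset_Icc_self Set.Ioc_subset_Icc_self

lemma kp_cont_swap_le {f : ℝ → ℝ → ℝ} (hf : Continuous (Function.uncurry f))
    {a b c d : ℝ} (hab : a ≤ b) (hcd : c ≤ d) :
    ∫ x in a..b, ∫ y in c..d, f x y = ∫ y in c..d, ∫ x in a..b, f x y := by
  rw [intervalIntegral.integral_of_le hab, intervalIntegral.integral_of_le hcd]
  simp_rw [intervalIntegral.integral_of_le hab, intervalIntegral.integral_of_le hcd]
  exact MeasureTheory.integral_integral_swap (kp_cont_integrable_prod hf a b c d)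

/-- Fubini for continuous functions over a rectangle. -/
lemma kp_cont_swap {f : ℝ → ℝ → ℝ} (hf : Continuous (Function.uncurry f))
    (a b c d : ℝ) :
    ∫ x in a..b, ∫ y in c..d, f x y = ∫ y in c..d, ∫ x in a..b, f x y := by
  rcases le_total a b with hab | hab <;> rcases le_total c d with hcd | hcd
  · exact kp_cont_swap_le hf hab hcd
  · rw [intervalIntegral.integral_symm d c]
    simp_rw [intervalIntegral.integral_symm d c]
    rw [intervalIntegral.integral_neg, kp_cont_swap_le hf hab hcd]
  · rw [intervalIntegral.integral_symm b a]
    simp_rw [intervalIntegral.integral_symm b a]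
    rw [kp_cont_swap_le hf hab hcd, intervalIntegral.integral_neg]
  · rw [intervalIntegral.integral_symm b a, intervalIntegral.integral_symm d c]
    simp_rw [intervalIntegral.integral_symm b a, intervalIntegral.integral_symm d c]
    rw [intervalIntegral.integral_neg, neg_neg , kp_cont_swap_le hf hab hcd]
    simp [intervalIntegral.integral_neg]

/-- Differentiation under the interval integral sign, for continuously
differentiable integrands. -/
lemma kp_param_hasDerivAt {f f' : ℝ → ℝ → ℝ} (hf : Continuous (Function.uncurry f))
    (hf' : Continuous (Function.uncurry f')) (a b : ℝ)
    (hd : ∀ s z, HasDerivAt (f s) (f' s z) z) (y : ℝ) :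
    HasDerivAt (fun z => ∫ s in a..b, f s z) (∫ s in a..b, f' s y) y := by
  have hΨ : Continuous fun z => ∫ s in a..b, f' s z := by
    apply intervalIntegral.continuous_parametric_intervalIntegral_of_continuous'
      (f := fun z s => f' s z)
    exact hf'.comp continuous_swap
  have key : ∀ z, ∫ s in a..b, f s z
      = (∫ s in a..b, f s 0) + ∫ τ in (0:ℝ)..z, ∫ s in a..b, f' s τ := by
    intro z
    have h1 : ∀ s, f s z = f s 0 + ∫ τ in (0:ℝ)..z, f' s τ := by
      intro s
      have := intervalIntegral.integral_eq_sub_of_hasDerivAt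
        (f := f s) (f' := f' s) (a := (0:ℝ)) (b := z)
        (fun τ _ => hd s τ) ((hf'.uncurry_left s).intervalIntegrable 0 z)
      linarith [this]
    calc ∫ s in a..b, f s z = ∫ s in a..b, (f s 0 + ∫ τ in (0:ℝ)..z, f' s τ) := by
          apply intervalIntegral.integral_congr; intro s _; exact h1 s
      _ = (∫ s in a..b, f s 0) + ∫ s in a..b, ∫ τ in (0:ℝ)..z, f' s τ := by
          apply intervalIntegral.integral_add
          · exact ((hf.uncurry_right 0)).intervalIntegrable a b
          · apply Continuous.intervalIntegrable
            exact intervalIntegral.continuous_parametric_intervalIntegral_of_continuous'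
              (f := fun s τ => f' s τ) hf' 0 z
      _ = (∫ s in a..b, f s 0) + ∫ τ in (0:ℝ)..z, ∫ s in a..b, f' s τ := by
          rw [kp_cont_swap hf']
  have heq : (fun z => ∫ s in a..b, f s z)
      = fun z => (∫ s in a..b, f s 0) + ∫ τ in (0:ℝ)..z, ∫ s in a..b, f' s τ := funext key
  rw [heq]
  exact ((hΨ.integral_hasStrictDerivAt 0 y).hasDerivAt).const_add _

lemma kp_slice1 {g : ℝ × ℝ × ℝ → ℝ} (hg : Differentiable ℝ g) (x y t : ℝ) :
    HasDerivAt (fun x' => g (x', y, t)) (fderiv ℝ g (x, y, t) (1, 0, 0)) x := by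
  have h : HasDerivAt (fun x' : ℝ => ((x', y, t) : ℝ × ℝ × ℝ)) (1, 0, 0) x :=
    (hasDerivAt_id x).prodMk ((hasDerivAt_const x y).prodMk (hasDerivAt_const x t))
  exact (hg (x, y, t)).hasFDerivAt.comp_hasDerivAt x h

lemma kp_slice2 {g : ℝ × ℝ × ℝ → ℝ} (hg : Differentiable ℝ g) (x y t : ℝ) :
    HasDerivAt (fun y' => g (x, y', t)) (fderiv ℝ g (x, y, t) (0, 1, 0)) y := by
  have h : HasDerivAt (fun y' : ℝ => ((x, y', t) : ℝ × ℝ × ℝ)) (0, 1, 0) y :=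
    (hasDerivAt_const y x).prodMk ((hasDerivAt_id y).prodMk (hasDerivAt_const y t))
  exact (hg (x, y, t)).hasFDerivAt.comp_hasDerivAt y h

lemma kp_slice3 {g : ℝ × ℝ × ℝ → ℝ} (hg : Differentiable ℝ g) (x y t : ℝ) :
    HasDerivAt (fun t' => g (x, y, t')) (fderiv ℝ g (x, y, t) (0, 0, 1)) t := by
  have h : HasDerivAt (fun t' : ℝ => ((x, y, t') : ℝ × ℝ × ℝ)) (0, 0, 1) t :=
    (hasDerivAt_const t x).prodMk ((hasDerivAt_const t y).prodMk (hasDerivAt_id t))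
  exact (hg (x, y, t)).hasFDerivAt.comp_hasDerivAt t h

variable {u : ℝ → ℝ → ℝ → ℝ}

/-- The uncurried solution. -/
def KK (u : ℝ → ℝ → ℝ → ℝ) : ℝ × ℝ × ℝ → ℝ := fun p => u p.1 p.2.1 p.2.2
def ppx (u : ℝ → ℝ → ℝ → ℝ) : ℝ × ℝ × ℝ → ℝ := fun p => fderiv ℝ (KK u) p (1, 0, 0)
def ppy (u : ℝ → ℝ → ℝ → ℝ) : ℝ × ℝ × ℝ → ℝ := fun p => fderiv ℝ (KK u) p (0, 1, 0)
def ppt (u : ℝ → ℝ → ℝ → ℝ) : ℝ × ℝ × ℝ → ℝ := fun p => fderiv ℝ (KK u) p (0, 0, 1)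
def ppxx (u : ℝ → ℝ → ℝ → ℝ) : ℝ × ℝ × ℝ → ℝ := fun p => fderiv ℝ (ppx u) p (1, 0, 0)
def ppxxx (u : ℝ → ℝ → ℝ → ℝ) : ℝ × ℝ × ℝ → ℝ := fun p => fderiv ℝ (ppxx u) p (1, 0, 0)
def ppyy (u : ℝ → ℝ → ℝ → ℝ) : ℝ × ℝ × ℝ → ℝ := fun p => fderiv ℝ (ppy u) p (0, 1, 0)

section partials
variable (h3 : ContDiff ℝ 3 (KK u))
include h3

lemma cd_ppx : ContDiff ℝ 2 (ppx u) := (h3.fderiv_right (by norm_num)).clm_apply contDiff_const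
lemma cd_ppy : ContDiff ℝ 2 (ppy u) := (h3.fderiv_right (by norm_num)).clm_apply contDiff_const
lemma cd_ppt : ContDiff ℝ 2 (ppt u) := (h3.fderiv_right (by norm_num)).clm_apply contDiff_const
lemma cd_ppxx : ContDiff ℝ 1 (ppxx u) :=
  ((cd_ppx h3).fderiv_right (by norm_num)).clm_apply contDiff_const
lemma cd_ppxxx : Continuous (ppxxx u) :=
  (((cd_ppxx h3).fderiv_right (m := 0) (by norm_num)).clm_apply contDiff_const).continuous
lemma cd_ppyy : ContDiff ℝ 1 (ppyy u) :=
  ((cd_ppy h3).fderiv_right (by norm_num)).clm_apply contDiff_const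

lemma hdx (x y t : ℝ) : HasDerivAt (fun x' => u x' y t) (ppx u (x, y, t)) x :=
  kp_slice1 (h3.differentiable (by norm_num)) x y t
lemma hdy (x y t : ℝ) : HasDerivAt (fun y' => u x y' t) (ppy u (x, y, t)) y :=
  kp_slice2 (h3.differentiable (by norm_num)) x y t
lemma hdt (x y t : ℝ) : HasDerivAt (fun t' => u x y t') (ppt u (x, y, t)) t :=
  kp_slice3 (h3.differentiable (by norm_num)) x y t
lemma hdx2 (x y t : ℝ) : HasDerivAt (fun x' => ppx u (x', y, t)) (ppxx u (x, y, t)) x :=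
  kp_slice1 ((cd_ppx h3).differentiable (by norm_num)) x y t
lemma hdx3 (x y t : ℝ) : HasDerivAt (fun x' => ppxx u (x', y, t)) (ppxxx u (x, y, t)) x :=
  kp_slice1 ((cd_ppxx h3).differentiable (by norm_num)) x y t
lemma hdyy (x y t : ℝ) : HasDerivAt (fun y' => ppy u (x, y', t)) (ppyy u (x, y, t)) y :=
  kp_slice2 ((cd_ppy h3).differentiable (by norm_num)) x y t

lemma pdx_eq (x y t : ℝ) : pdx u x y t = ppx u (x, y, t) := (hdx h3 x y t).deriv
lemma pdy_eq (x y t : ℝ) : pdy u x y t = ppy u (x, y, t) := (hdy h3 x y t).deriv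
lemma pdt_eq (x y t : ℝ) : pdt u x y t = ppt u (x, y, t) := (hdt h3 x y t).deriv

lemma pdx3_eq (x y t : ℝ) : pdx3 u x y t = ppxxx u (x, y, t) := by
  have e1 : deriv (fun x' => u x' y t) = fun x' => ppx u (x', y, t) :=
    funext fun x' => (hdx h3 x' y t).deriv
  have e2 : deriv (fun x' => ppx u (x', y, t)) = fun x' => ppxx u (x', y, t) :=
    funext fun x' => (hdx2 h3 x' y t).deriv
  show iteratedDeriv 3 (fun x' => u x' y t) x = _
  rw [show (3 : ℕ) = 2 + 1 from rfl, iteratedDeriv_succ,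
    show (2 : ℕ) = 1 + 1 from rfl, iteratedDeriv_succ, iteratedDeriv_one, e1, e2]
  exact (hdx3 h3 x y t).deriv

lemma pdy2_eq (x y t : ℝ) : pdy2 u x y t = ppyy u (x, y, t) := by
  have e1 : deriv (fun y' => u x y' t) = fun y' => ppy u (x, y', t) :=
    funext fun y' => (hdy h3 x y' t).deriv
  show iteratedDeriv 2 (fun y' => u x y' t) y = _
  rw [show (2 : ℕ) = 1 + 1 from rfl, iteratedDeriv_succ, iteratedDeriv_one, e1]
  exact (hdyy h3 x y t).deriv

end partials

lemma contC3 {g : ℝ × ℝ × ℝ → ℝ} (hg : Continuous g) {X : Type*} [TopologicalSpace X]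
    {f1 f2 f3 : X → ℝ} (h1 : Continuous f1) (h2 : Continuous f2) (h3 : Continuous f3) :
    Continuous fun z => g (f1 z, f2 z, f3 z) := hg.comp (h1.prodMk (h2.prodMk h3))

/-- Splitting a double interval integral of a difference. -/
lemma kp_double_sub {f g : ℝ → ℝ → ℝ} (hf : Continuous (Function.uncurry f))
    (hg : Continuous (Function.uncurry g)) (a b c d : ℝ) :
    ∫ x in a..b, ∫ y in c..d, (f x y - g x y)
      = (∫ x in a..b, ∫ y in c..d, f x y) - ∫ x in a..b, ∫ y in c..d, g x y := by
  have h1 : ∀ x, ∫ y in c..d, (f x y - g x y)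
      = (∫ y in c..d, f x y) - ∫ y in c..d, g x y := fun x =>
    intervalIntegral.integral_sub ((hf.uncurry_left x).intervalIntegrable c d)
      ((hg.uncurry_left x).intervalIntegrable c d)
  rw [intervalIntegral.integral_congr (fun x _ => h1 x)]
  apply intervalIntegral.integral_sub
  · exact (intervalIntegral.continuous_parametric_intervalIntegral_of_continuous'
      hf c d).intervalIntegrable a b
  · exact (intervalIntegral.continuous_parametric_intervalIntegral_of_continuous'
      hg c d).intervalIntegrable a b

end Aux

set_option maxHeartbeats 4000000 in
/-- The energy of a classical solution of the closed-loop linear KP-II system is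
non-increasing on `[0,T]`, and for every `t ∈ (0,T)`,
`E′(t) ≤ -C [∫₀^L u_x(0,y,t)² dy + ∫₀^L u(x,L,t)² dx + ∫₀^L ((∂ₓ⁻¹ u_y)(0,y,t))² dy]`
with `C = min{(1-α²)/2, β}`. -/
theorem kp_energy_decay (L T α β : ℝ) (hL : 0 < L) (hT : 0 < T)
    (hα0 : 0 < |α|) (hα1 : |α| < 1) (hβ : 0 < β)
    (u : ℝ → ℝ → ℝ → ℝ) (hu : IsKPSolution L T α β u) :
    AntitoneOn (energy L u) (Set.Icc 0 T) ∧
    ∀ t ∈ Set.Ioo (0:ℝ) T,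
      DifferentiableAt ℝ (energy L u) t ∧
      deriv (energy L u) t ≤
        -(min ((1 - α^2)/2) β) *
          ((∫ y in (0:ℝ)..L, (pdx u 0 y t)^2)
            + (∫ x in (0:ℝ)..L, (u x L t)^2)
            + (∫ y in (0:ℝ)..L, (pxInv L (fun s y' => pdy u s y' t) 0 y)^2)) := by
  obtain ⟨h3', hpde, hbc1, hbc2⟩ := hu
  have h3 : ContDiff ℝ 3 (KK u) := h3'
  have hL0 : (0:ℝ) ≤ L := hL.le
  have cK : Continuous (KK u) := h3.continuous
  have cpx : Continuous (ppx u) := (cd_ppx h3).continuous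
  have cpy : Continuous (ppy u) := (cd_ppy h3).continuous
  have cpt : Continuous (ppt u) := (cd_ppt h3).continuous
  have cpxx : Continuous (ppxx u) := (cd_ppxx h3).continuous
  have cpxxx : Continuous (ppxxx u) := cd_ppxxx h3
  have cpyy : Continuous (ppyy u) := (cd_ppyy h3).continuous
  set φ : ℝ → ℝ :=
    fun τ => ∫ x in (0:ℝ)..L, ∫ y in (0:ℝ)..L, u x y τ * ppt u (x, y, τ) with hφdef
  -- Step A : the energy is differentiable with derivative φ.
  have hE : ∀ τ : ℝ, HasDerivAt (energy L u) (φ τ) τ := by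
    intro τ
    have hinner : ∀ (x : ℝ) (τ' : ℝ),
        HasDerivAt (fun z => ∫ y in (0:ℝ)..L, (u x y z)^2)
          (∫ y in (0:ℝ)..L, 2 * (u x y τ' * ppt u (x, y, τ'))) τ' := by
      intro x τ'
      apply kp_param_hasDerivAt (f := fun y z => (u x y z)^2)
        (f' := fun y z => 2 * (u x y z * ppt u (x, y, z)))
      · exact (contC3 cK continuous_const continuous_fst continuous_snd).pow 2
      · exact continuous_const.mul
          ((contC3 cK continuous_const continuous_fst continuous_snd).mul
            (contC3 cpt continuous_const continuous_fst continuous_snd))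
      · intro y z
        have h := (hdt h3 x y z).pow 2
        refine h.congr_deriv ?_
        push_cast; ring
    have houter : HasDerivAt (fun z => ∫ x in (0:ℝ)..L, ∫ y in (0:ℝ)..L, (u x y z)^2)
        (∫ x in (0:ℝ)..L, ∫ y in (0:ℝ)..L, 2 * (u x y τ * ppt u (x, y, τ))) τ := by
      apply kp_param_hasDerivAt
        (f := fun x z => ∫ y in (0:ℝ)..L, (u x y z)^2)
        (f' := fun x z => ∫ y in (0:ℝ)..L, 2 * (u x y z * ppt u (x, y, z)))
      · apply intervalIntegral.continuous_parametric_intervalIntegral_of_continuous'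
          (f := fun (q : ℝ × ℝ) (y : ℝ) => (u q.1 y q.2)^2)
        exact (contC3 cK (continuous_fst.comp continuous_fst) continuous_snd
          (continuous_snd.comp continuous_fst)).pow 2
      · apply intervalIntegral.continuous_parametric_intervalIntegral_of_continuous'
          (f := fun (q : ℝ × ℝ) (y : ℝ) => 2 * (u q.1 y q.2 * ppt u (q.1, y, q.2)))
        exact continuous_const.mul
          ((contC3 cK (continuous_fst.comp continuous_fst) continuous_snd
            (continuous_snd.comp continuous_fst)).mul
           (contC3 cpt (continuous_fst.comp continuous_fst) continuous_snd
            (continuous_snd.comp continuous_fst)))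
      · intro x z; exact hinner x z
    have h2 : (∫ x in (0:ℝ)..L, ∫ y in (0:ℝ)..L, 2 * (u x y τ * ppt u (x, y, τ)))
        = 2 * φ τ := by
      rw [hφdef]
      simp only
      rw [← intervalIntegral.integral_const_mul]
      apply intervalIntegral.integral_congr; intro x _
      exact intervalIntegral.integral_const_mul 2 fun y => u x y τ * ppt u (x, y, τ)
    have hfinal := HasDerivAt.const_mul (1/2 : ℝ) houter
    have : (1/2 : ℝ) * (∫ x in (0:ℝ)..L, ∫ y in (0:ℝ)..L, 2 * (u x y τ * ppt u (x, y, τ)))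
        = φ τ := by rw [h2]; ring
    rw [this] at hfinal
    exact hfinal
  -- auxiliary interval facts
  have huIcc : Set.uIcc (0:ℝ) L = Set.Icc (0:ℝ) L := Set.uIcc_of_le hL0
  have hsub : ∀ x ∈ Set.Icc (0:ℝ) L, Set.uIcc x L ⊆ Set.Icc (0:ℝ) L := by
    intro x hx
    rw [Set.uIcc_of_le hx.2]
    exact Set.Icc_subset_Icc hx.1 le_rfl
  have hLmem : L ∈ Set.Icc (0:ℝ) L := ⟨hL0, le_rfl⟩
  -- Step B : the value of the derivative for t ∈ (0,T)
  have hval : ∀ t ∈ Set.Ioo (0:ℝ) T, φ t =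
      -((1 - α^2)/2 * (∫ y in (0:ℝ)..L, (ppx u (0, y, t))^2)
        + β * (∫ x in (0:ℝ)..L, (u x L t)^2)
        + (1/2) * (∫ y in (0:ℝ)..L, (-(∫ s in (0:ℝ)..L, ppy u (s, y, t)))^2)) := by
    intro t ht
    have htT : t ∈ Set.Icc 0 T := Set.mem_Icc_of_Ioo ht
    have hb0 : ∀ y ∈ Set.Icc (0:ℝ) L, u 0 y t = 0 := fun y hy => (hbc1 y hy t htT).1
    have hbL : ∀ y ∈ Set.Icc (0:ℝ) L, u L y t = 0 := fun y hy => (hbc1 y hy t htT).2.1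
    have hbx : ∀ y ∈ Set.Icc (0:ℝ) L, ppx u (L, y, t) = α * ppx u (0, y, t) := by
      intro y hy
      have h := (hbc1 y hy t htT).2.2
      rwa [pdx_eq h3, pdx_eq h3] at h
    have hbyL : ∀ x ∈ Set.Icc (0:ℝ) L, ppy u (x, L, t) = β * ppx u (x, L, t) := by
      intro x hx
      have h := (hbc2 x hx t htT).1
      rwa [pdy_eq h3, pdx_eq h3] at h
    have hby0 : ∀ x ∈ Set.Icc (0:ℝ) L, ppy u (x, 0, t) = 0 := by
      intro x hx
      have h := (hbc2 x hx t htT).2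
      rwa [pdy_eq h3] at h
    -- auxiliary potential and its y-derivative
    set vy : ℝ → ℝ → ℝ := fun x y => -(∫ s in x..L, ppy u (s, y, t)) with hvydef
    set w : ℝ → ℝ → ℝ := fun x y => -(∫ s in x..L, ppyy u (s, y, t)) with hwdef
    have cvy : Continuous (Function.uncurry vy) := by
      have h1 : Continuous fun p : ℝ × ℝ => ∫ s in L..p.2, ppy u (s, p.1, t) :=
        intervalIntegral.continuous_parametric_primitive_of_continuous
          (f := fun (y : ℝ) (s : ℝ) => ppy u (s, y, t))
          (contC3 cpy continuous_snd continuous_fst continuous_const)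
      have h2 : Continuous fun q : ℝ × ℝ => ∫ s in L..q.1, ppy u (s, q.2, t) := by
        have h2' := h1.comp (continuous_swap : Continuous (Prod.swap : ℝ × ℝ → ℝ × ℝ))
        have heq2 : ((fun p : ℝ × ℝ => ∫ s in L..p.2, ppy u (s, p.1, t)) ∘ Prod.swap)
            = fun q : ℝ × ℝ => ∫ s in L..q.1, ppy u (s, q.2, t) := by
          funext q; simp [Function.comp]
        rw [← heq2]; exact h2'
      have heq : Function.uncurry vy = fun q : ℝ × ℝ => ∫ s in L..q.1, ppy u (s, q.2, t) := by
        funext q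
        show -(∫ s in q.1..L, ppy u (s, q.2, t)) = _
        rw [intervalIntegral.integral_symm L q.1, neg_neg]
      rw [heq]; exact h2
    have cw : Continuous (Function.uncurry w) := by
      have h1 : Continuous fun p : ℝ × ℝ => ∫ s in L..p.2, ppyy u (s, p.1, t) :=
        intervalIntegral.continuous_parametric_primitive_of_continuous
          (f := fun (y : ℝ) (s : ℝ) => ppyy u (s, y, t))
          (contC3 cpyy continuous_snd continuous_fst continuous_const)
      have h2 : Continuous fun q : ℝ × ℝ => ∫ s in L..q.1, ppyy u (s, q.2, t) := by
        have h2' := h1.comp (continuous_swap : Continuous (Prod.swap : ℝ × ℝ → ℝ × ℝ))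
        have heq2 : ((fun p : ℝ × ℝ => ∫ s in L..p.2, ppyy u (s, p.1, t)) ∘ Prod.swap)
            = fun q : ℝ × ℝ => ∫ s in L..q.1, ppyy u (s, q.2, t) := by
          funext q; simp [Function.comp]
        rw [← heq2]; exact h2'
      have heq : Function.uncurry w = fun q : ℝ × ℝ => ∫ s in L..q.1, ppyy u (s, q.2, t) := by
        funext q
        show -(∫ s in q.1..L, ppyy u (s, q.2, t)) = _
        rw [intervalIntegral.integral_symm L q.1, neg_neg]
      rw [heq]; exact h2
    have hvy_x : ∀ x y : ℝ, HasDerivAt (fun x' => vy x' y) (ppy u (x, y, t)) x := by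
      intro x y
      have hg : Continuous fun s => ppy u (s, y, t) :=
        contC3 cpy continuous_id continuous_const continuous_const
      have heq : (fun x' => vy x' y) = fun x' => ∫ s in L..x', ppy u (s, y, t) := by
        funext x'
        show -(∫ s in x'..L, ppy u (s, y, t)) = _
        rw [intervalIntegral.integral_symm L x', neg_neg]
      rw [heq]
      exact (hg.integral_hasStrictDerivAt L x).hasDerivAt
    have hvy_y : ∀ x y : ℝ, HasDerivAt (fun y' => vy x y') (w x y) y := by
      intro x y
      have h := kp_param_hasDerivAt (f := fun s y' => ppy u (s, y', t))
        (f' := fun s y' => ppyy u (s, y', t))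
        (contC3 cpy continuous_fst continuous_snd continuous_const)
        (contC3 cpyy continuous_fst continuous_snd continuous_const)
        x L (fun s z => hdyy h3 s z t) y
      exact h.neg
    have hvyL' : ∀ y : ℝ, vy L y = 0 := by
      intro y; show -(∫ s in L..L, ppy u (s, y, t)) = 0; simp
    have hvy0 : ∀ x ∈ Set.Icc (0:ℝ) L, vy x 0 = 0 := by
      intro x hx
      show -(∫ s in x..L, ppy u (s, 0, t)) = 0
      have h : ∫ s in x..L, ppy u (s, 0, t) = ∫ s in x..L, (0:ℝ) :=
        intervalIntegral.integral_congr (fun s hs => hby0 s (hsub x hx hs))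
      rw [h]; simp
    have hvyL : ∀ x ∈ Set.Icc (0:ℝ) L, vy x L = β * u x L t := by
      intro x hx
      have h1 : ∫ s in x..L, ppy u (s, L, t) = ∫ s in x..L, β * ppx u (s, L, t) :=
        intervalIntegral.integral_congr (fun s hs => hbyL s (hsub x hx hs))
      have h2 : ∫ s in x..L, ppx u (s, L, t) = u L L t - u x L t :=
        intervalIntegral.integral_eq_sub_of_hasDerivAt (fun s _ => hdx h3 s L t)
          ((contC3 cpx continuous_id continuous_const continuous_const).intervalIntegrable x L)
      show -(∫ s in x..L, ppy u (s, L, t)) = _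
      rw [h1, intervalIntegral.integral_const_mul, h2, hbL L hLmem]
      ring
    -- the PDE, extended to the closed square by continuity
    have hpde' : ∀ x ∈ Set.Icc (0:ℝ) L, ∀ y ∈ Set.Icc (0:ℝ) L,
        ppt u (x, y, t) = -(ppx u (x, y, t)) - ppxxx u (x, y, t) - w x y := by
      have hEq : Set.EqOn (fun p : ℝ × ℝ => ppt u (p.1, p.2, t))
          (fun p : ℝ × ℝ => -(ppx u (p.1, p.2, t)) - ppxxx u (p.1, p.2, t) - w p.1 p.2)
          (Set.Ioo (0:ℝ) L ×ˢ Set.Ioo (0:ℝ) L) := by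
        rintro ⟨x, y⟩ ⟨hx, hy⟩
        have h := hpde x hx y hy t ht
        rw [pdt_eq h3, pdx_eq h3, pdx3_eq h3] at h
        have hw : pxInv L (fun s y' => pdy2 u s y' t) x y = w x y := by
          show -(∫ s in x..L, pdy2 u s y t) = -(∫ s in x..L, ppyy u (s, y, t))
          congr 1
          exact intervalIntegral.integral_congr (fun s _ => pdy2_eq h3 s y t)
        rw [hw] at h
        show ppt u (x, y, t) = -(ppx u (x, y, t)) - ppxxx u (x, y, t) - w x y
        linarith
      have hcl := hEq.closure
        (contC3 cpt continuous_fst continuous_snd continuous_const)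
        ((((contC3 cpx continuous_fst continuous_snd continuous_const).neg).sub
          (contC3 cpxxx continuous_fst continuous_snd continuous_const)).sub cw)
      intro x hx y hy
      have hmem : (x, y) ∈ closure (Set.Ioo (0:ℝ) L ×ˢ Set.Ioo (0:ℝ) L) := by
        rw [closure_prod_eq, closure_Ioo hL.ne]
        exact ⟨hx, hy⟩
      exact hcl hmem
    -- continuity of the integrands
    have cU : Continuous (Function.uncurry fun x y => u x y t) :=
      contC3 cK continuous_fst continuous_snd continuous_const
    have cPy : Continuous (Function.uncurry fun x y => ppy u (x, y, t)) :=
      contC3 cpy continuous_fst continuous_snd continuous_const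
    have c1 : Continuous (Function.uncurry fun x y => u x y t * ppx u (x, y, t)) :=
      cU.mul (contC3 cpx continuous_fst continuous_snd continuous_const)
    have c2 : Continuous (Function.uncurry fun x y => u x y t * ppxxx u (x, y, t)) :=
      cU.mul (contC3 cpxxx continuous_fst continuous_snd continuous_const)
    have c3 : Continuous (Function.uncurry fun x y => u x y t * w x y) := cU.mul cw
    have cg2 : Continuous (Function.uncurry fun x y => ppy u (x, y, t) * vy x y) :=
      cPy.mul cvy
    have cg1 : Continuous
        (Function.uncurry fun x y => ppy u (x, y, t) * vy x y + u x y t * w x y) :=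
      cg2.add c3
    -- split φ t into three pieces
    have hsplit : φ t = -(∫ x in (0:ℝ)..L, ∫ y in (0:ℝ)..L, u x y t * ppx u (x, y, t))
        - (∫ x in (0:ℝ)..L, ∫ y in (0:ℝ)..L, u x y t * ppxxx u (x, y, t))
        - (∫ x in (0:ℝ)..L, ∫ y in (0:ℝ)..L, u x y t * w x y) := by
      have hcongr : (∫ x in (0:ℝ)..L, ∫ y in (0:ℝ)..L, u x y t * ppt u (x, y, t))
          = ∫ x in (0:ℝ)..L, ∫ y in (0:ℝ)..L,
              ((-(u x y t * ppx u (x, y, t)) - u x y t * ppxxx u (x, y, t))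
                - u x y t * w x y) := by
        apply intervalIntegral.integral_congr; intro x hx
        simp only
        apply intervalIntegral.integral_congr; intro y hy
        simp only
        rw [hpde' x (huIcc ▸ hx) y (huIcc ▸ hy)]
        ring
      show (∫ x in (0:ℝ)..L, ∫ y in (0:ℝ)..L, u x y t * ppt u (x, y, t)) = _
      rw [hcongr,
        kp_double_sub
          (f := fun x y => -(u x y t * ppx u (x, y, t)) - u x y t * ppxxx u (x, y, t))
          (g := fun x y => u x y t * w x y) (by exact c1.neg.sub c2) c3,
        kp_double_sub (f := fun x y => -(u x y t * ppx u (x, y, t)))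
          (g := fun x y => u x y t * ppxxx u (x, y, t)) (by exact c1.neg) c2]
      have hneg : (∫ x in (0:ℝ)..L, ∫ y in (0:ℝ)..L, -(u x y t * ppx u (x, y, t)))
          = -(∫ x in (0:ℝ)..L, ∫ y in (0:ℝ)..L, u x y t * ppx u (x, y, t)) := by
        simp_rw [intervalIntegral.integral_neg]
      rw [hneg]
    -- first piece vanishes
    have hJ1 : (∫ x in (0:ℝ)..L, ∫ y in (0:ℝ)..L, u x y t * ppx u (x, y, t)) = 0 := by
      rw [kp_cont_swap c1]
      have hin : ∀ y ∈ Set.uIcc (0:ℝ) L,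
          (∫ x in (0:ℝ)..L, u x y t * ppx u (x, y, t)) = 0 := by
        intro y hy
        rw [huIcc] at hy
        have hder : ∀ x ∈ Set.uIcc (0:ℝ) L, HasDerivAt (fun x' => (u x' y t)^2/2)
            (u x y t * ppx u (x, y, t)) x := by
          intro x _
          have h := ((hdx h3 x y t).pow 2).div_const 2
          refine h.congr_deriv ?_; push_cast; ring
        rw [intervalIntegral.integral_eq_sub_of_hasDerivAt hder
          (((contC3 cK continuous_id continuous_const continuous_const).mul
            (contC3 cpx continuous_id continuous_const continuous_const)).intervalIntegrable 0 L)]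
        rw [hb0 y hy, hbL y hy]
        norm_num
      rw [intervalIntegral.integral_congr (g := fun _ => (0:ℝ)) (fun y hy => hin y hy)]
      simp
    -- second piece: the third-derivative term
    have hJ2 : (∫ x in (0:ℝ)..L, ∫ y in (0:ℝ)..L, u x y t * ppxxx u (x, y, t))
        = (1 - α^2)/2 * ∫ y in (0:ℝ)..L, (ppx u (0, y, t))^2 := by
      rw [kp_cont_swap c2]
      have hin : ∀ y ∈ Set.uIcc (0:ℝ) L,
          (∫ x in (0:ℝ)..L, u x y t * ppxxx u (x, y, t))
            = (1 - α^2)/2 * (ppx u (0, y, t))^2 := by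
        intro y hy
        rw [huIcc] at hy
        have hder : ∀ x ∈ Set.uIcc (0:ℝ) L,
            HasDerivAt (fun x' => u x' y t * ppxx u (x', y, t) - (ppx u (x', y, t))^2/2)
              (u x y t * ppxxx u (x, y, t)) x := by
          intro x _
          have h := ((hdx h3 x y t).mul (hdx3 h3 x y t)).sub
            (((hdx2 h3 x y t).pow 2).div_const 2)
          refine h.congr_deriv ?_; push_cast; ring
        rw [intervalIntegral.integral_eq_sub_of_hasDerivAt hder
          (((contC3 cK continuous_id continuous_const continuous_const).mul
            (contC3 cpxxx continuous_id continuous_const continuous_const)).intervalIntegrable 0 L)]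
        rw [hb0 y hy, hbL y hy, hbx y hy]
        ring
      rw [intervalIntegral.integral_congr
        (g := fun y => (1 - α^2)/2 * (ppx u (0, y, t))^2) (fun y hy => hin y hy),
        intervalIntegral.integral_const_mul]
    -- third piece: the nonlocal term
    have hJ3 : (∫ x in (0:ℝ)..L, ∫ y in (0:ℝ)..L, u x y t * w x y)
        = β * (∫ x in (0:ℝ)..L, (u x L t)^2)
          + (1/2) * ∫ y in (0:ℝ)..L, (vy 0 y)^2 := by
      have hsplit3 : (∫ x in (0:ℝ)..L, ∫ y in (0:ℝ)..L, u x y t * w x y)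
          = (∫ x in (0:ℝ)..L, ∫ y in (0:ℝ)..L,
              (ppy u (x, y, t) * vy x y + u x y t * w x y))
            - ∫ x in (0:ℝ)..L, ∫ y in (0:ℝ)..L, ppy u (x, y, t) * vy x y := by
        rw [← kp_double_sub
          (f := fun x y => ppy u (x, y, t) * vy x y + u x y t * w x y)
          (g := fun x y => ppy u (x, y, t) * vy x y) cg1 cg2]
        apply intervalIntegral.integral_congr; intro x _
        simp only
        apply intervalIntegral.integral_congr; intro y _
        simp only
        ring
      have hG1 : (∫ x in (0:ℝ)..L, ∫ y in (0:ℝ)..L,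
            (ppy u (x, y, t) * vy x y + u x y t * w x y))
          = β * ∫ x in (0:ℝ)..L, (u x L t)^2 := by
        have hin : ∀ x ∈ Set.uIcc (0:ℝ) L,
            (∫ y in (0:ℝ)..L, (ppy u (x, y, t) * vy x y + u x y t * w x y))
              = β * (u x L t)^2 := by
          intro x hx
          rw [huIcc] at hx
          have hder : ∀ y ∈ Set.uIcc (0:ℝ) L,
              HasDerivAt (fun y' => u x y' t * vy x y')
                (ppy u (x, y, t) * vy x y + u x y t * w x y) y :=
            fun y _ => (hdy h3 x y t).mul (hvy_y x y)
          rw [intervalIntegral.integral_eq_sub_of_hasDerivAt hder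
            ((cg1.uncurry_left x).intervalIntegrable 0 L)]
          rw [hvyL x hx, hvy0 x hx]
          ring
        rw [intervalIntegral.integral_congr
          (g := fun x => β * (u x L t)^2) (fun x hx => hin x hx),
          intervalIntegral.integral_const_mul]
      have hG2 : (∫ x in (0:ℝ)..L, ∫ y in (0:ℝ)..L, ppy u (x, y, t) * vy x y)
          = -(1/2) * ∫ y in (0:ℝ)..L, (vy 0 y)^2 := by
        rw [kp_cont_swap cg2]
        have hin : ∀ y ∈ Set.uIcc (0:ℝ) L,
            (∫ x in (0:ℝ)..L, ppy u (x, y, t) * vy x y) = -(1/2) * (vy 0 y)^2 := by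
          intro y _
          have hder : ∀ x ∈ Set.uIcc (0:ℝ) L,
              HasDerivAt (fun x' => (vy x' y)^2/2) (ppy u (x, y, t) * vy x y) x := by
            intro x _
            have h := ((hvy_x x y).pow 2).div_const 2
            refine h.congr_deriv ?_; push_cast; ring
          rw [intervalIntegral.integral_eq_sub_of_hasDerivAt hder
            ((cg2.uncurry_right y).intervalIntegrable 0 L)]
          rw [hvyL' y]
          ring
        rw [intervalIntegral.integral_congr
          (g := fun y => -(1/2) * (vy 0 y)^2) (fun y hy => hin y hy),
          intervalIntegral.integral_const_mul]
      rw [hsplit3, hG1, hG2]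
      ring
    rw [hsplit, hJ1, hJ2, hJ3]
    simp only [hvydef]
    ring
  -- nonnegativity facts
  have hA : ∀ τ : ℝ, 0 ≤ ∫ y in (0:ℝ)..L, (ppx u (0, y, τ))^2 := fun τ =>
    intervalIntegral.integral_nonneg hL0 (fun y _ => sq_nonneg _)
  have hB : ∀ τ : ℝ, 0 ≤ ∫ x in (0:ℝ)..L, (u x L τ)^2 := fun τ =>
    intervalIntegral.integral_nonneg hL0 (fun x _ => sq_nonneg _)
  have hD : ∀ τ : ℝ, 0 ≤ ∫ y in (0:ℝ)..L, (-(∫ s in (0:ℝ)..L, ppy u (s, y, τ)))^2 := fun τ =>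
    intervalIntegral.integral_nonneg hL0 (fun y _ => sq_nonneg _)
  have hα2 : α^2 ≤ 1 := by nlinarith [sq_abs α, abs_nonneg α]
  constructor
  · apply antitoneOn_of_deriv_nonpos (convex_Icc 0 T)
    · intro τ _
      exact ((hE τ).differentiableAt).continuousAt.continuousWithinAt
    · intro τ hτ
      exact ((hE τ).differentiableAt).differentiableWithinAt
    · intro τ hτ
      rw [interior_Icc] at hτ
      rw [(hE τ).deriv, hval τ hτ]
      have h1 := hA τ; have h2 := hB τ; have h3 := hD τ
      nlinarith [mul_nonneg (by linarith : (0:ℝ) ≤ (1 - α^2)/2) h1,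
        mul_nonneg hβ.le h2]
  · intro t ht
    refine ⟨(hE t).differentiableAt, ?_⟩
    rw [(hE t).deriv, hval t ht]
    simp only [pdx_eq h3, pxInv, pdy_eq h3]
    have h1 := hA t; have h2 := hB t; have h3' := hD t
    have hC1 : min ((1 - α^2)/2) β ≤ (1 - α^2)/2 := min_le_left _ _
    have hC2 : min ((1 - α^2)/2) β ≤ β := min_le_right _ _
    have hC3 : min ((1 - α^2)/2) β ≤ 1/2 := le_trans hC1 (by nlinarith [sq_nonneg α])
    nlinarith [mul_le_mul_of_nonneg_right hC1 h1, mul_le_mul_of_nonneg_right hC2 h2,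
      mul_le_mul_of_nonneg_right hC3 h3']

end
end
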